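/- Let $T(u)$ be a rooted tree and let $(a_1,\dots,a_n)$ be its hom-vector into $P_n$ for odd $n$, i.e., $a_i$ is the number of homomorphisms $f: T \to P_n$ with $f(u) = i$. If $i < j$ and $i \not\equiv j \pmod 2$, then $a_i a_j \leq a_{i+1} a_{j-1}$. -/

import Mathlib

open SimpleGraph

namespace LogConcavHelpers

/-- The log-concavity-type property of a sequence indexed by ℤ. -/
def QQ (b : ℤ → ℕ) : Prop :=
  ∀ i j : ℤ, i < j → i % 2 ≠ j % 2 → b i * b j ≤ b (i + 1) * b (j - 1)

lemma QQ_mul {b c : ℤ → ℕ} (hb : QQ b) (hc : QQ c) : QQ (fun i => b i * c i) := by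
  intro i j hij hpar
  calc b i * c i * (b j * c j) = (b i * b j) * (c i * c j) := by ring
    _ ≤ (b (i+1) * b (j-1)) * (c (i+1) * c (j-1)) :=
        Nat.mul_le_mul (hb i j hij hpar) (hc i j hij hpar)
    _ = b (i+1) * c (i+1) * (b (j-1) * c (j-1)) := by ring

lemma QQ_const (K : ℕ) : QQ (fun _ => K) := fun _ _ _ _ => le_rfl

lemma QQ_smul {b : ℤ → ℕ} (K : ℕ) (hb : QQ b) : QQ (fun i => K * b i) :=
  QQ_mul (QQ_const K) hb

lemma QQ_of_smul {b : ℤ → ℕ} {K : ℕ} (hK : 0 < K) (h : QQ (fun i => K * b i)) : QQ b := by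
  intro i j hij hpar
  have := h i j hij hpar
  simp only at this
  have h2 : K * K * (b i * b j) ≤ K * K * (b (i+1) * b (j-1)) := by
    calc K * K * (b i * b j) = K * b i * (K * b j) := by ring
      _ ≤ K * b (i+1) * (K * b (j-1)) := this
      _ = K * K * (b (i+1) * b (j-1)) := by ring
  exact Nat.le_of_mul_le_mul_left h2 (Nat.mul_pos hK hK)

lemma QQ_ind {b : ℤ → ℕ} (hb : QQ b) (n : ℕ) :
    QQ (fun i => if 0 ≤ i ∧ i < n then b i else 0) := by
  intro i j hij hpar
  by_cases hi : 0 ≤ i ∧ i < n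
  · by_cases hj : 0 ≤ j ∧ j < n
    · have h1 : (0 ≤ i + 1 ∧ i + 1 < (n:ℤ)) := by omega
      have h2 : (0 ≤ j - 1 ∧ j - 1 < (n:ℤ)) := by omega
      simp only [if_pos hi, if_pos hj, if_pos h1, if_pos h2]
      exact hb i j hij hpar
    · simp [if_neg hj]
  · simp [if_neg hi]

lemma QQ_step {b : ℤ → ℕ} (hb : QQ b) : QQ (fun i => b (i - 1) + b (i + 1)) := by
  intro i j hij hpar
  simp only [add_sub_cancel_right, sub_add_cancel]
  rcases eq_or_lt_of_le (by omega : i + 1 ≤ j) with h | h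
  · subst h
    simp only [add_sub_cancel_right]
    rw [Nat.mul_comm]
  · have hj3 : i + 3 ≤ j := by omega
    have h1 := hb (i-1) (j-1) (by omega) (by omega)
    have h2 := hb (i-1) (j+1) (by omega) (by omega)
    have h3 := hb (i+1) (j-1) (by omega) (by omega)
    have h4 := hb (i+1) (j+1) (by omega) (by omega)
    have e1 : i - 1 + 1 = i := by ring
    have e2 : j - 1 - 1 = j - 2 := by ring
    have e3 : j + 1 - 1 = j := by ring
    have e4 : i + 1 + 1 = i + 2 := by ring
    rw [e1, e2] at h1; rw [e1, e3] at h2; rw [e4, e2] at h3; rw [e4, e3] at h4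
    rw [e2, e4]
    calc (b (i-1) + b (i+1)) * (b (j-1) + b (j+1))
        = b (i-1) * b (j-1) + b (i-1) * b (j+1) + b (i+1) * b (j-1) + b (i+1) * b (j+1) := by ring
      _ ≤ b i * b (j-2) + b i * b j + b (i+2) * b (j-2) + b (i+2) * b j := by
          gcongr <;> assumption
      _ = (b i + b (i+2)) * (b (j-2) + b j) := by ring


section cnt
variable (n : ℕ) {V : Type*} [Fintype V] [DecidableEq V]

def stp (a b : ℤ) : Prop := b = a + 1 ∨ b = a - 1

instance : DecidableRel stp := fun a b => by unfold stp; infer_instance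

/-- weighted count of "homs" determined by parent map `p` with root `u`,
constraints and weights restricted to `s`. -/
def cnt (p : V → V) (u : V) (μ : V → ℤ → ℕ) (s : Finset V) (i : ℤ) : ℕ :=
  ∑ f : V → Fin n, if ((f u : ℤ) = i ∧ ∀ v ∈ s, v ≠ u → stp (f (p v) : ℤ) (f v : ℤ))
    then ∏ v ∈ s, μ v (f v) else 0

lemma sum_update_eq (v : V) (G : (V → Fin n) → ℕ) :
    ∑ q : (V → Fin n) × Fin n, G (Function.update q.1 v q.2) = n * ∑ f : V → Fin n, G f := by
  have inv : Function.Involutive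
      (fun q : (V → Fin n) × Fin n => (Function.update q.1 v q.2, q.1 v)) := by
    intro q
    simp [Function.update_idem]
  have key := Fintype.sum_equiv inv.toPerm
    (fun q : (V → Fin n) × Fin n => G (Function.update q.1 v q.2))
    (fun q => G q.1) (fun q => rfl)
  rw [key, Fintype.sum_prod_type]
  simp [Finset.mul_sum, mul_comm]


lemma sum_fin_one (x : ℤ) (h : ℤ → ℕ) :
    (∑ c : Fin n, if (c:ℤ) = x then h (c:ℤ) else 0)
      = if 0 ≤ x ∧ x < n then h x else 0 := by
  by_cases hx : 0 ≤ x ∧ x < n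
  · have hcast : ((⟨x.toNat, by omega⟩ : Fin n) : ℤ) = x := by
      simp only [Fin.val_mk]; omega
    rw [if_pos hx, Finset.sum_eq_single (⟨x.toNat, by omega⟩ : Fin n)]
    · rw [if_pos hcast, hcast]
    · intro c _ hc
      rw [if_neg]
      intro hcx
      exact hc (by ext; omega)
    · simp
  · rw [if_neg hx, Finset.sum_eq_zero]
    intro c _
    rw [if_neg]
    intro hcx
    exact hx (by constructor <;> omega)

lemma sum_fin_two (a : ℤ) (g : ℤ → ℕ) :
    (∑ c : Fin n, if stp a (c:ℤ) then g (c:ℤ) else 0)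
      = (if 0 ≤ a - 1 ∧ a - 1 < n then g (a-1) else 0)
        + (if 0 ≤ a + 1 ∧ a + 1 < n then g (a+1) else 0) := by
  have split : ∀ c : Fin n, (if stp a (c:ℤ) then g (c:ℤ) else 0)
      = (if (c:ℤ) = a - 1 then g (c:ℤ) else 0) + (if (c:ℤ) = a + 1 then g (c:ℤ) else 0) := by
    intro c
    unfold stp
    by_cases h1 : (c:ℤ) = a - 1 <;> by_cases h2 : (c:ℤ) = a + 1 <;>
      simp [h1, h2] <;> omega
  rw [Finset.sum_congr rfl (fun c _ => split c), Finset.sum_add_distrib, sum_fin_one n, sum_fin_one n, add_comm]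

/-- the new weight at the parent after removing leaf `v` -/
def nw (μ : V → ℤ → ℕ) (v : V) (w : V) : ℤ → ℕ := fun k =>
  μ w k * ((if 0 ≤ k - 1 ∧ k - 1 < n then μ v (k-1) else 0)
            + (if 0 ≤ k + 1 ∧ k + 1 < n then μ v (k+1) else 0))

lemma cnt_erase (p : V → V) (u v : V) (μ : V → ℤ → ℕ) (s : Finset V) (i : ℤ)
    (hv : v ∈ s) (hvu : v ≠ u) (hw : p v ∈ s) (hwv : p v ≠ v)
    (hpre : ∀ x ∈ s, x ≠ v → p x ≠ v) :
    cnt n p u (Function.update μ (p v) (nw n μ v (p v))) (s.erase v) i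
      = n * cnt n p u μ s i := by
  classical
  set w := p v with hwdef
  set β : ℤ → ℕ := fun k =>
    (if 0 ≤ k - 1 ∧ k - 1 < n then μ v (k-1) else 0)
      + (if 0 ≤ k + 1 ∧ k + 1 < n then μ v (k+1) else 0) with hβ
  unfold cnt
  rw [← sum_update_eq n v, Fintype.sum_prod_type]
  apply Finset.sum_congr rfl
  intro f _
  -- pointwise identity
  have hwe : w ∈ s.erase v := Finset.mem_erase.2 ⟨hwv, hw⟩
  have hcond : ∀ c : Fin n,
      (((Function.update f v c) u : ℤ) = i ∧
        ∀ x ∈ s, x ≠ u → stp ((Function.update f v c) (p x) : ℤ) ((Function.update f v c) x : ℤ))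
      ↔ (((f u : ℤ) = i ∧ ∀ x ∈ s.erase v, x ≠ u → stp (f (p x) : ℤ) (f x : ℤ))
          ∧ stp (f w : ℤ) (c : ℤ)) := by
    intro c
    rw [Function.update_of_ne (Ne.symm hvu)]
    constructor
    · rintro ⟨h1, h2⟩
      refine ⟨⟨h1, ?_⟩, ?_⟩
      · intro x hx hxu
        have hx' := Finset.mem_erase.1 hx
        have := h2 x hx'.2 hxu
        rwa [Function.update_of_ne (hpre x hx'.2 hx'.1), Function.update_of_ne hx'.1] at this
      · have := h2 v hv hvu
        rwa [Function.update_of_ne hwv, Function.update_self] at this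
    · rintro ⟨⟨h1, h2⟩, h3⟩
      refine ⟨h1, ?_⟩
      intro x hx hxu
      by_cases hxv : x = v
      · subst hxv
        rwa [Function.update_of_ne hwv, Function.update_self]
      · rw [Function.update_of_ne (hpre x hx hxv), Function.update_of_ne hxv]
        exact h2 x (Finset.mem_erase.2 ⟨hxv, hx⟩) hxu
  have hprod : ∀ c : Fin n,
      (∏ x ∈ s, μ x ((Function.update f v c) x)) = μ v c * ∏ x ∈ s.erase v, μ x (f x) := by
    intro c
    nth_rewrite 1 [← Finset.insert_erase hv]
    rw [Finset.prod_insert (Finset.notMem_erase _ _)]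
    rw [Function.update_self]
    congr 1
    apply Finset.prod_congr rfl
    intro x hx
    rw [Function.update_of_ne (Finset.mem_erase.1 hx).1]
  symm
  calc (∑ c : Fin n, if (((Function.update f v c) u : ℤ) = i ∧
        ∀ x ∈ s, x ≠ u → stp ((Function.update f v c) (p x) : ℤ) ((Function.update f v c) x : ℤ))
        then ∏ x ∈ s, μ x ((Function.update f v c) x) else 0)
      = ∑ c : Fin n, if (((f u : ℤ) = i ∧ ∀ x ∈ s.erase v, x ≠ u → stp (f (p x) : ℤ) (f x : ℤ))
          ∧ stp (f w : ℤ) (c : ℤ)) then μ v c * ∏ x ∈ s.erase v, μ x (f x) else 0 := by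
        apply Finset.sum_congr rfl
        intro c _
        by_cases h : (((Function.update f v c) u : ℤ) = i ∧
          ∀ x ∈ s, x ≠ u → stp ((Function.update f v c) (p x) : ℤ) ((Function.update f v c) x : ℤ))
        · rw [if_pos h, if_pos ((hcond c).1 h), hprod c]
        · rw [if_neg h, if_neg (fun h' => h ((hcond c).2 h'))]
    _ = if ((f u : ℤ) = i ∧ ∀ x ∈ s.erase v, x ≠ u → stp (f (p x) : ℤ) (f x : ℤ))
          then β (f w) * ∏ x ∈ s.erase v, μ x (f x) else 0 := by
        by_cases hA : ((f u : ℤ) = i ∧ ∀ x ∈ s.erase v, x ≠ u → stp (f (p x) : ℤ) (f x : ℤ))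
        · rw [if_pos hA]
          have : ∀ c : Fin n, (if ((((f u : ℤ) = i ∧ ∀ x ∈ s.erase v, x ≠ u →
              stp (f (p x) : ℤ) (f x : ℤ))) ∧ stp (f w : ℤ) (c : ℤ))
              then μ v c * ∏ x ∈ s.erase v, μ x (f x) else 0)
              = (if stp (f w : ℤ) (c : ℤ) then μ v c else 0) * ∏ x ∈ s.erase v, μ x (f x) := by
            intro c
            by_cases hs : stp (f w : ℤ) (c : ℤ)
            · rw [if_pos ⟨hA, hs⟩, if_pos hs]
            · rw [if_neg (fun h' => hs h'.2), if_neg hs, zero_mul]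
          rw [Finset.sum_congr rfl (fun c _ => this c), ← Finset.sum_mul, sum_fin_two]
        · rw [if_neg hA, Finset.sum_eq_zero]
          intro c _
          rw [if_neg (fun h' => hA h'.1)]
    _ = if ((f u : ℤ) = i ∧ ∀ x ∈ s.erase v, x ≠ u → stp (f (p x) : ℤ) (f x : ℤ))
          then ∏ x ∈ s.erase v, (Function.update μ w (nw n μ v w)) x (f x) else 0 := by
        congr 1
        have : (fun x => (Function.update μ w (nw n μ v w)) x ((f x : ℤ)))
            = Function.update (fun x => μ x (f x)) w (nw n μ v w (f w)) := by
          funext x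
          by_cases hx : x = w
          · subst hx; simp
          · simp [Function.update_of_ne hx]
        calc β (f w) * ∏ x ∈ s.erase v, μ x (f x)
            = β (f w) * (μ w (f w) * ∏ x ∈ (s.erase v).erase w, μ x (f x)) := by
              rw [Finset.mul_prod_erase (s.erase v) (fun x => μ x ((f x : ℤ))) hwe]
          _ = nw n μ v w (f w) * ∏ x ∈ (s.erase v).erase w, μ x (f x) := by
              rw [nw]; ring
          _ = ∏ x ∈ s.erase v, (Function.update μ w (nw n μ v w)) x (f x) := by
              rw [show (fun x => (Function.update μ w (nw n μ v w)) x (f x)) =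
                Function.update (fun x => μ x (f x)) w (nw n μ v w (f w)) from this] at *
              rw [Finset.prod_update_of_mem hwe, Finset.erase_eq]

lemma QQ_cnt (hn : 0 < n) (p : V → V) (u : V) (hpu : p u = u)
    (hg : ∀ x, ∃ k, p^[k] x = u) :
    ∀ s : Finset V, u ∈ s → (∀ x ∈ s, p x ∈ s) →
      ∀ μ : V → ℤ → ℕ, (∀ x, QQ (μ x)) → QQ (cnt n p u μ s) := by
  intro s
  induction s using Finset.strongInduction with
  | _ s ih =>
  intro hus hcl μ hμ
  by_cases hsu : s = {u}
  · -- base case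
    subst hsu
    apply QQ_of_smul hn (b := cnt n p u μ {u})
    have key : ∀ i : ℤ, n * cnt n p u μ {u} i
        = (Fintype.card (V → Fin n)) * (if 0 ≤ i ∧ i < n then μ u i else 0) := by
      intro i
      unfold cnt
      rw [← sum_update_eq n u, Fintype.sum_prod_type]
      have hpt : ∀ (f : V → Fin n) (c : Fin n),
          (if (((Function.update f u c) u : ℤ) = i ∧ ∀ v ∈ ({u} : Finset V), v ≠ u →
              stp ((Function.update f u c) (p v) : ℤ) ((Function.update f u c) v : ℤ))
            then ∏ v ∈ ({u} : Finset V), μ v ((Function.update f u c) v) else 0)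
          = if (c : ℤ) = i then μ u (c : ℤ) else 0 := by
        intro f c
        simp [Function.update_self]
      calc ∑ f : V → Fin n, ∑ c : Fin n,
            (if (((Function.update f u c) u : ℤ) = i ∧ ∀ v ∈ ({u} : Finset V), v ≠ u →
              stp ((Function.update f u c) (p v) : ℤ) ((Function.update f u c) v : ℤ))
            then ∏ v ∈ ({u} : Finset V), μ v ((Function.update f u c) v) else 0)
          = ∑ _f : V → Fin n, ∑ c : Fin n, (if (c : ℤ) = i then μ u (c : ℤ) else 0) := by
            exact Finset.sum_congr rfl fun f _ => Finset.sum_congr rfl fun c _ => hpt f c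
        _ = ∑ _f : V → Fin n, (if 0 ≤ i ∧ i < n then μ u i else 0) := by
            exact Finset.sum_congr rfl fun f _ => sum_fin_one n i (μ u)
        _ = (Fintype.card (V → Fin n)) * (if 0 ≤ i ∧ i < n then μ u i else 0) := by
            rw [Finset.sum_const, Finset.card_univ, smul_eq_mul]
    have : (fun i : ℤ => n * cnt n p u μ {u} i)
        = fun i : ℤ => (Fintype.card (V → Fin n)) * (if 0 ≤ i ∧ i < n then μ u i else 0) :=
      funext key
    rw [this]
    exact QQ_smul _ (QQ_ind (hμ u) n)
  · -- inductive step
    have hex : ∃ v ∈ s.erase u, True := by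
      by_contra hc
      push_neg at hc
      apply hsu
      apply Finset.eq_singleton_iff_unique_mem.2
      refine ⟨hus, fun x hx => ?_⟩
      by_contra hxu
      exact hc x (Finset.mem_erase.2 ⟨hxu, hx⟩)
    obtain ⟨v0, hv0, -⟩ := hex
    have hne : (s.erase u).Nonempty := ⟨v0, hv0⟩
    set h : V → ℕ := fun x => Nat.find (hg x) with hh
    obtain ⟨v, hvmem, hmax⟩ := Finset.exists_max_image (s.erase u) h hne
    have hfind : ∀ x, p^[h x] x = u := fun x => Nat.find_spec (hg x)
    have hzero : ∀ x, x ≠ u → h x ≠ 0 := by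
      intro x hx h0
      apply hx
      have := hfind x
      rwa [h0, Function.iterate_zero_apply] at this
    have hvs : v ∈ s := (Finset.mem_erase.1 hvmem).2
    have hvu : v ≠ u := (Finset.mem_erase.1 hvmem).1
    have hwv : p v ≠ v := by
      intro hfix
      apply hvu
      have h1 := hfind v
      rw [Function.iterate_fixed hfix (h v)] at h1
      exact h1
    have hpre : ∀ x ∈ s, x ≠ v → p x ≠ v := by
      intro x hxs hxv hpx
      have hxu : x ≠ u := by
        intro hxu
        subst hxu
        rw [hpu] at hpx
        exact hvu hpx.symm
      have hle : h x ≤ h v := hmax x (Finset.mem_erase.2 ⟨hxu, hxs⟩)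
      have hx0 : h x ≠ 0 := hzero x hxu
      have hvlt : h v < h x := by
        have h1 : p^[h x - 1] (p x) = u := by
          have := hfind x
          rwa [show h x = (h x - 1) + 1 by omega, Function.iterate_succ_apply] at this
        rw [hpx] at h1
        have h2 : h v ≤ h x - 1 := Nat.find_min' (hg v) h1
        omega
      omega
    have hcnt := fun i => cnt_erase n p u v μ s i hvs hvu (hcl v hvs) hwv hpre
    have hss : s.erase v ⊂ s := Finset.erase_ssubset hvs
    have hμ' : ∀ x, QQ ((Function.update μ (p v) (nw n μ v (p v))) x) := by
      intro x
      by_cases hx : x = p v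
      · subst hx
        rw [Function.update_self]
        exact QQ_mul (hμ (p v)) (QQ_step (QQ_ind (hμ v) n))
      · rw [Function.update_of_ne hx]
        exact hμ x
    have hih := ih (s.erase v) hss
      (Finset.mem_erase.2 ⟨Ne.symm hvu, hus⟩)
      (fun x hx => Finset.mem_erase.2
        ⟨hpre x (Finset.mem_erase.1 hx).2 (Finset.mem_erase.1 hx).1,
          hcl x (Finset.mem_erase.1 hx).2⟩)
      (Function.update μ (p v) (nw n μ v (p v))) hμ'
    apply QQ_of_smul hn (b := cnt n p u μ s)
    have : (fun i : ℤ => n * cnt n p u μ s i)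
        = cnt n p u (Function.update μ (p v) (nw n μ v (p v))) (s.erase v) :=
      funext fun i => (hcnt i).symm
    rw [this]
    exact hih

end cnt

section Tree
variable {V : Type*} (T : SimpleGraph V) (hT : T.IsTree) (u : V)

/-- the unique path from `v` to `u` in the tree `T` -/
noncomputable def pth (v : V) : T.Walk v u := (hT.existsUnique_path v u).choose

lemma pth_isPath (v : V) : (pth T hT u v).IsPath := (hT.existsUnique_path v u).choose_spec.1

lemma pth_unique {v : V} (q : T.Walk v u) (hq : q.IsPath) : q = pth T hT u v :=
  (hT.existsUnique_path v u).choose_spec.2 q hq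

open Classical in
noncomputable def parent (v : V) : V := if v = u then u else (pth T hT u v).getVert 1

lemma pth_self : pth T hT u u = Walk.nil :=
  (pth_unique T hT u Walk.nil (Walk.IsPath.nil)).symm

lemma parent_root : parent T hT u u = u := if_pos rfl

lemma parent_adj {v : V} (hv : v ≠ u) : T.Adj v (parent T hT u v) := by
  rw [parent, if_neg hv]
  exact Walk.adj_snd (Walk.not_nil_of_ne hv)

lemma pth_length_parent {v : V} (hv : v ≠ u) :
    (pth T hT u (parent T hT u v)).length < (pth T hT u v).length := by
  cases hq : pth T hT u v with
  | nil => exact absurd rfl hv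
  | @cons _ b _ ha r =>
    have hparent : parent T hT u v = b := by
      rw [parent, if_neg hv, hq, Walk.getVert_cons_succ, Walk.getVert_zero]
    have hr : r.IsPath := by
      have := pth_isPath T hT u v
      rw [hq, Walk.cons_isPath_iff] at this
      exact this.1
    rw [hparent, ← pth_unique T hT u r hr]
    simp [Walk.length_cons]

lemma parent_ground (v : V) : ∃ k, (parent T hT u)^[k] v = u := by
  generalize hn : (pth T hT u v).length = m
  induction m using Nat.strong_induction_on generalizing v with
  | _ m ih =>
    by_cases hv : v = u
    · exact ⟨0, hv⟩
    · obtain ⟨k, hk⟩ := ih (pth T hT u (parent T hT u v)).length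
        (hn ▸ pth_length_parent T hT u hv) (parent T hT u v) rfl
      exact ⟨k + 1, by rw [Function.iterate_succ_apply, hk]⟩

lemma adj_iff {x y : V} : T.Adj x y ↔
    (x ≠ u ∧ parent T hT u x = y) ∨ (y ≠ u ∧ parent T hT u y = x) := by
  classical
  constructor
  · intro hxy
    by_cases hx : x ∈ (pth T hT u y).support
    · -- x on the path from y to u; show parent y = x
      right
      have hyu : y ≠ u := by
        intro hyeq
        subst hyeq
        rw [pth_self] at hx
        simp only [Walk.support_nil, List.mem_singleton] at hx
        exact T.irrefl (hx ▸ hxy)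
      refine ⟨hyu, ?_⟩
      set d := (pth T hT u y).dropUntil x hx with hd
      have hdp : d.IsPath := (pth_isPath T hT u y).dropUntil hx
      have hyd : y ∉ d.support := by
        intro hysup
        have hyx : y ≠ x := hxy.ne'
        have hytail : y ∈ d.support.tail := by
          have := Walk.support_eq_cons d
          rw [this] at hysup
          rcases List.mem_cons.1 hysup with h | h
          · exact absurd h hyx
          · exact h
        have hspec := Walk.take_spec (pth T hT u y) hx
        have hnodup : ((pth T hT u y).support).Nodup := (pth_isPath T hT u y).support_nodup
        rw [← hspec, Walk.support_append] at hnodup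
        have hdisj := List.disjoint_of_nodup_append hnodup
        exact hdisj (Walk.start_mem_support _) hytail
      have hcons : (Walk.cons hxy.symm d).IsPath := hdp.cons hyd
      have heq : Walk.cons hxy.symm d = pth T hT u y := pth_unique T hT u _ hcons
      rw [parent, if_neg hyu, ← heq, Walk.getVert_cons_succ, Walk.getVert_zero]
    · left
      have hxu : x ≠ u := by
        intro hxeq
        exact hx (by rw [hxeq]; exact (pth T hT u y).end_mem_support)
      refine ⟨hxu, ?_⟩
      have hcons : (Walk.cons hxy (pth T hT u y)).IsPath := (pth_isPath T hT u y).cons hx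
      have heq : Walk.cons hxy (pth T hT u y) = pth T hT u x := pth_unique T hT u _ hcons
      rw [parent, if_neg hxu, ← heq, Walk.getVert_cons_succ, Walk.getVert_zero]
  · rintro (⟨hxu, rfl⟩ | ⟨hyu, rfl⟩)
    · exact parent_adj T hT u hxu
    · exact (parent_adj T hT u hyu).symm
end Tree

section Final
variable {V : Type*} [Fintype V] [DecidableEq V] (T : SimpleGraph V) (hT : T.IsTree)
  (u : V) (n : ℕ)

lemma cond_iff (f : V → Fin n) :
    (∀ a b : V, T.Adj a b → (pathGraph n).Adj (f a) (f b)) ↔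
      (∀ v : V, v ≠ u → stp ((f (parent T hT u v)) : ℤ) ((f v) : ℤ)) := by
  constructor
  · intro h v hv
    have := h v _ (parent_adj T hT u hv)
    rw [pathGraph_adj] at this
    unfold stp
    omega
  · intro h a b hab
    rcases (adj_iff T hT u).1 hab with ⟨hau, hpa⟩ | ⟨hbu, hpb⟩
    · have := h a hau
      rw [hpa] at this
      unfold stp at this
      rw [pathGraph_adj]
      omega
    · have := h b hbu
      rw [hpb] at this
      unfold stp at this
      rw [pathGraph_adj]
      omega

lemma card_eq_cnt (c : Fin n) :
    Nat.card {f : T →g pathGraph n // f u = c}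
      = cnt n (parent T hT u) u (fun _ _ => 1) Finset.univ (c : ℤ) := by
  classical
  have e : {f : T →g pathGraph n // f u = c} ≃
      {f : V → Fin n // ((f u : ℤ) = (c : ℤ) ∧
        ∀ v ∈ Finset.univ, v ≠ u → stp ((f (parent T hT u v)) : ℤ) ((f v) : ℤ))} :=
    { toFun := fun φ => ⟨⇑φ.1, by
        constructor
        · rw [φ.2]
        · intro v _ hv
          exact ((cond_iff T hT u n ⇑φ.1).1 (fun a b hab => φ.1.map_adj hab)) v hv⟩
      invFun := fun g => ⟨⟨g.1, fun {a b} hab =>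
          ((cond_iff T hT u n g.1).2 (fun v hv => g.2.2 v (Finset.mem_univ v) hv)) a b hab⟩, by
        exact Fin.ext (by exact_mod_cast g.2.1)⟩
      left_inv := fun φ => rfl
      right_inv := fun g => rfl }
  rw [Nat.card_congr e, Nat.card_eq_fintype_card, Fintype.card_subtype]
  unfold cnt
  rw [Finset.card_eq_sum_ones, Finset.sum_filter]
  apply Finset.sum_congr rfl
  intro f _
  by_cases h : ((f u : ℤ) = (c : ℤ) ∧
      ∀ v ∈ Finset.univ, v ≠ u → stp ((f (parent T hT u v)) : ℤ) ((f v) : ℤ))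
  · rw [if_pos h, if_pos h, Finset.prod_const_one]
  · rw [if_neg h, if_neg h]

end Final

end LogConcavHelpers

open LogConcavHelpers in
/-- Log-concavity of the hom-vector of a rooted tree into an odd path: if
`a i` is the number of homomorphisms of the rooted tree `(T, u)` into `P_n` sending `u`
to the `i`-th vertex, `i < j` and `i ≢ j (mod 2)`, then `a i * a j ≤ a (i+1) * a (j-1)`. -/
theorem stmt_16 {V : Type*} [Fintype V] (T : SimpleGraph V) (hT : T.IsTree) (u : V)
    (n : ℕ) (hn : Odd n) (a : Fin n → ℕ)
    (ha : ∀ i : Fin n, a i = Nat.card {f : T →g pathGraph n // f u = i})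
    (i j : ℕ) (hij : i < j) (hjn : j < n) (hpar : i % 2 ≠ j % 2) :
    a ⟨i, by omega⟩ * a ⟨j, hjn⟩ ≤ a ⟨i + 1, by omega⟩ * a ⟨j - 1, by omega⟩ := by
  have : DecidableEq V := Classical.decEq V
  have hn0 : 0 < n := hn.pos
  set p := parent T hT u with hp
  have hQ : QQ (cnt n p u (fun _ _ => 1) Finset.univ) :=
    QQ_cnt n hn0 p u (parent_root T hT u) (parent_ground T hT u)
      Finset.univ (Finset.mem_univ u) (fun x _ => Finset.mem_univ (p x))
      (fun _ _ => 1) (fun _ => QQ_const 1)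
  have key := hQ (i : ℤ) (j : ℤ) (by omega) (by omega)
  have e1 : ∀ (k : ℕ) (hk : k < n), a ⟨k, hk⟩ = cnt n p u (fun _ _ => 1) Finset.univ (k : ℤ) := by
    intro k hk
    rw [ha ⟨k, hk⟩, card_eq_cnt T hT u n ⟨k, hk⟩]
  rw [e1 i (by omega), e1 j hjn, e1 (i+1) (by omega), e1 (j-1) (by omega)]
  have c1 : ((i+1 : ℕ) : ℤ) = (i : ℤ) + 1 := by push_cast; ring
  have c2 : ((j-1 : ℕ) : ℤ) = (j : ℤ) - 1 := by
    have : 1 ≤ j := by omega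
    push_cast [this]
    ring
  rw [c1, c2]
  exact key
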